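/- Let R be a commutative ring containing no infinite set of orthogonal idempotents and such that every non-nilpotent ideal of R contains a nonzero idempotent element. Then every prime ideal of R is a maximal ideal. -/

import Mathlib

/-- `R` contains no infinite set of orthogonal idempotents. -/
def NoInfiniteOrthogonalIdempotentsRing (R : Type*) [CommRing R] : Prop :=
  ∀ S : Set R, (∀ e ∈ S, e ≠ 0 ∧ e * e = e) →
    (∀ e ∈ S, ∀ f ∈ S, e ≠ f → e * f = 0) → S.Finite

section Aux

variable {R : Type*} [CommRing R]

open Classical

/-- Pick a nonzero idempotent in the ideal generated by `x * g`, if one exists. -/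
noncomputable def pickIdem (x g : R) : R :=
  if h : ∃ e, (∃ c, c * (x * g) = e) ∧ e ≠ 0 ∧ e * e = e then h.choose else 0

theorem pickIdem_spec {x g : R}
    (h : ∃ e, (∃ c, c * (x * g) = e) ∧ e ≠ 0 ∧ e * e = e) :
    (∃ c, c * (x * g) = pickIdem x g) ∧ pickIdem x g ≠ 0 ∧
      pickIdem x g * pickIdem x g = pickIdem x g := by
  classical
  rw [pickIdem, dif_pos h]
  exact h.choose_spec

/-- The sequence of "remaining" idempotents. -/
noncomputable def gSeq (x : R) : ℕ → R
  | 0 => 1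
  | n + 1 => gSeq x n * (1 - pickIdem x (gSeq x n))

theorem idem_pow {g : R} (hg : g * g = g) (n : ℕ) : g ^ (n + 1) = g := by
  induction n with
  | zero => simp
  | succ n ih => rw [pow_succ, ih, hg]

theorem exists_idem_aux {P : Ideal R} (hP : P.IsPrime)
    (hidem : ∀ I : Ideal R, ¬ IsNilpotent I → ∃ e ∈ I, e ≠ (0 : R) ∧ e * e = e)
    {x g : R} (hx : x ∉ P) (hg : g * g = g) (hgP : g ∉ P) :
    ∃ e, (∃ c, c * (x * g) = e) ∧ e ≠ 0 ∧ e * e = e := by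
  have hnil : ¬ IsNilpotent (Ideal.span {x * g}) := by
    rintro ⟨n, hn⟩
    have hn1 : Ideal.span {x * g} ^ (n + 1) = 0 := by
      rw [pow_succ, hn, Ideal.zero_eq_bot, Ideal.bot_mul]
    rw [Ideal.span_singleton_pow, Ideal.zero_eq_bot, Ideal.span_singleton_eq_bot] at hn1
    have hxg : x ^ (n + 1) * g = 0 := by
      rw [mul_pow, idem_pow hg] at hn1; exact hn1
    have hmem : x ^ (n + 1) * g ∈ P := by rw [hxg]; exact P.zero_mem
    rcases hP.mem_or_mem hmem with h | h
    · exact hx (hP.mem_of_pow_mem _ h)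
    · exact hgP h
  obtain ⟨e, he, h0, hi⟩ := hidem _ hnil
  exact ⟨e, Ideal.mem_span_singleton'.mp he, h0, hi⟩

theorem gSeq_inv {P : Ideal R} (hP : P.IsPrime)
    (hidem : ∀ I : Ideal R, ¬ IsNilpotent I → ∃ e ∈ I, e ≠ (0 : R) ∧ e * e = e)
    {x : R} (hx : x ∉ P) (H : ∀ y, x * y - 1 ∉ P) (n : ℕ) :
    gSeq x n * gSeq x n = gSeq x n ∧ gSeq x n ∉ P ∧
      ∀ m < n, gSeq x n * pickIdem x (gSeq x m) = 0 := by
  induction n with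
  | zero =>
    refine ⟨by simp [gSeq], ?_, by omega⟩
    intro h1
    exact hP.ne_top (Ideal.eq_top_iff_one P |>.mpr (by simpa [gSeq] using h1))
  | succ n ih =>
    obtain ⟨hgg, hgP, horthm⟩ := ih
    set g := gSeq x n with hgdef
    obtain ⟨⟨c, hc⟩, h0, hi⟩ := pickIdem_spec (exists_idem_aux hP hidem hx hgg hgP)
    set e := pickIdem x g with hedef
    have hstep : gSeq x (n + 1) = g * (1 - e) := rfl
    refine ⟨?_, ?_, ?_⟩
    · rw [hstep]
      linear_combination (1 - e) * (1 - e) * hgg + g * hi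
    · rw [hstep]
      intro hmem
      rcases hP.mem_or_mem hmem with h | h
      · exact hgP h
      · refine H (c * g) ?_
        have : x * (c * g) - 1 = -(1 - e) := by rw [← hc]; ring
        rw [this]
        exact P.neg_mem h
    · intro m hm
      rw [hstep]
      rcases Nat.lt_or_ge m n with h | h
      · have := horthm m h
        calc g * (1 - e) * pickIdem x (gSeq x m)
            = g * pickIdem x (gSeq x m) * (1 - e) := by ring
          _ = 0 := by rw [this, zero_mul]
      · have hmn : m = n := by omega
        subst hmn
        rw [← hedef]
        linear_combination -g * hi

end Aux

theorem prime_ideal_is_maximal {R : Type*} [CommRing R]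
    (horth : NoInfiniteOrthogonalIdempotentsRing R)
    (hidem : ∀ I : Ideal R, ¬ IsNilpotent I → ∃ e ∈ I, e ≠ (0 : R) ∧ e * e = e)
    (P : Ideal R) (hP : P.IsPrime) : P.IsMaximal := by
  have key : ∀ x ∉ P, ∃ y, x * y - 1 ∈ P := by
    intro x hx
    by_contra H
    push_neg at H
    set e : ℕ → R := fun n => pickIdem x (gSeq x n) with hedef
    have inv := gSeq_inv hP hidem hx H
    have espec : ∀ n, (∃ c, c * (x * gSeq x n) = e n) ∧ e n ≠ 0 ∧ e n * e n = e n :=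
      fun n => pickIdem_spec (exists_idem_aux hP hidem hx (inv n).1 (inv n).2.1)
    have orth : ∀ m n, m < n → e n * e m = 0 := by
      intro m n hmn
      obtain ⟨⟨c, hc⟩, _, _⟩ := espec n
      have h0 := (inv n).2.2 m hmn
      calc e n * e m = c * (x * gSeq x n) * e m := by rw [hc]
        _ = c * x * (gSeq x n * e m) := by ring
        _ = 0 := by rw [h0, mul_zero]
    have einj : Function.Injective e := by
      intro m n hmn
      by_contra hne
      rcases Nat.lt_or_ge m n with h | h
      · exact (espec n).2.1 (by rw [← (espec n).2.2]; nth_rw 2 [← hmn]; exact orth m n h)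
      · have h' : n < m := by omega
        exact (espec m).2.1 (by rw [← (espec m).2.2]; nth_rw 2 [hmn]; exact orth n m h')
    have hfin := horth (Set.range e)
      (by rintro a ⟨n, rfl⟩; exact ⟨(espec n).2.1, (espec n).2.2⟩)
      (by
        rintro a ⟨n, rfl⟩ b ⟨m, rfl⟩ hne
        have hnm : n ≠ m := fun h => hne (by rw [h])
        rcases Nat.lt_or_ge m n with h | h
        · exact orth m n h
        · have h' : n < m := by omega
          rw [mul_comm]; exact orth n m h')
    exact Set.infinite_range_of_injective einj hfin
  have hfield : IsField (R ⧸ P) := by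
    refine ⟨exists_pair_ne _, mul_comm, ?_⟩
    intro a ha
    obtain ⟨x, rfl⟩ := Ideal.Quotient.mk_surjective a
    have hx : x ∉ P := fun h => ha (Ideal.Quotient.eq_zero_iff_mem.mpr h)
    obtain ⟨y, hy⟩ := key x hx
    refine ⟨Ideal.Quotient.mk P y, ?_⟩
    rw [← map_mul]
    have : Ideal.Quotient.mk P (x * y) = Ideal.Quotient.mk P 1 :=
      Ideal.Quotient.eq.mpr (by simpa using hy)
    simpa using this
  exact Ideal.Quotient.maximal_of_isField P hfield
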